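/- arXiv:1202.3933 — 3 statements merged into one kernel-verified Lean document; each statement's English description precedes it below -/
import Mathlib

section
/- For every integer n ≥ 2, ∫₀^∞ x^{n−1}/(e^x − 1) dx − ∫₀^∞ (x + iπ)^{n−1}/(e^{x+iπ} − 1) dx = i ∫₀^π (iy)^{n−1}/(e^{iy} − 1) dy. -/
open scoped Real
open MeasureTheory
open Complex Set Filter Topology intervalIntegral

noncomputable def hfun (z : ℂ) : ℂ := if z = 0 then 1 else z / (Complex.exp z - 1)

lemma hfun_eq {z : ℂ} (hz : z ≠ 0) : hfun z = z / (Complex.exp z - 1) := if_neg hz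

lemma gfun_eq {n : ℕ} (hn : 2 ≤ n) {z : ℂ} (hz : z ≠ 0) :
    z ^ (n - 2) * hfun z = z ^ (n - 1) / (Complex.exp z - 1) := by
  rw [hfun_eq hz, mul_div_assoc', ← pow_succ]
  congr 2
  omega

lemma hfun_continuousAt_zero : ContinuousAt hfun 0 := by
  rw [← continuousWithinAt_compl_self]
  have h1 : Tendsto (fun z : ℂ => (Complex.exp z - 1) / z) (𝓝[≠] 0) (𝓝 1) := by
    have h := Complex.hasDerivAt_exp 0
    rw [hasDerivAt_iff_tendsto_slope] at h
    rw [Complex.exp_zero] at h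
    refine h.congr fun z => ?_
    simp [slope_def_field, Complex.exp_zero]
  have h2 : Tendsto (fun z : ℂ => ((Complex.exp z - 1) / z)⁻¹) (𝓝[≠] 0) (𝓝 1) := by
    simpa using h1.inv₀ one_ne_zero
  have he : hfun 0 = 1 := if_pos rfl
  rw [ContinuousWithinAt, he]
  refine h2.congr' ?_
  filter_upwards [self_mem_nhdsWithin] with z hz
  rw [inv_div, hfun_eq hz]

lemma exp_ne_one_of_im {z : ℂ} (hz : z ≠ 0) (h0 : 0 ≤ z.im) (h1 : z.im ≤ π) :
    Complex.exp z ≠ 1 := by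
  intro hh
  rw [Complex.exp_eq_one_iff] at hh
  obtain ⟨k, hk⟩ := hh
  have him : z.im = (k : ℝ) * (2 * π) := by
    rw [hk]; simp [Complex.mul_im]
  have hπ := Real.pi_pos
  rw [him] at h0 h1
  have hk0 : (0 : ℝ) ≤ (k : ℝ) := by nlinarith
  have hk1 : (k : ℝ) < 1 := by nlinarith
  have : k = 0 := by exact_mod_cast (by omega : ((0:ℤ) ≤ k ∧ k < 1) → k = 0) ⟨by exact_mod_cast hk0, by exact_mod_cast hk1⟩
  apply hz
  rw [hk, this]; simp

lemma hfun_continuousAt {z : ℂ} (hz : z ≠ 0) (he : Complex.exp z ≠ 1) : ContinuousAt hfun z := by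
  have hd : Complex.exp z - 1 ≠ 0 := sub_ne_zero.mpr he
  have h : ContinuousAt (fun w : ℂ => w / (Complex.exp w - 1)) z :=
    continuousAt_id.div (Complex.continuous_exp.continuousAt.sub continuousAt_const) hd
  refine h.congr ?_
  filter_upwards [isOpen_compl_singleton.mem_nhds hz] with w hw
  exact (hfun_eq hw).symm

lemma hfun_differentiableAt {z : ℂ} (hz : z ≠ 0) (he : Complex.exp z ≠ 1) :
    DifferentiableAt ℂ hfun z := by
  have hd : Complex.exp z - 1 ≠ 0 := sub_ne_zero.mpr he
  have h : DifferentiableAt ℂ (fun w : ℂ => w / (Complex.exp w - 1)) z :=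
    differentiableAt_id.div ((Complex.differentiable_exp z).sub (differentiableAt_const 1)) hd
  refine h.congr_of_eventuallyEq ?_
  filter_upwards [isOpen_compl_singleton.mem_nhds hz] with w hw
  exact hfun_eq hw

lemma rect_eq (n : ℕ) (hn : 2 ≤ n) {R : ℝ} (hR : 0 < R) :
    (∫ x in (0:ℝ)..R, (x:ℂ) ^ (n-1) / (Complex.exp x - 1))
      - (∫ x in (0:ℝ)..R, ((x:ℂ) + Complex.I * π) ^ (n-1) / (Complex.exp ((x:ℂ) + Complex.I * π) - 1))
      + Complex.I • (∫ y in (0:ℝ)..π, ((R:ℂ) + y * Complex.I) ^ (n-1) / (Complex.exp ((R:ℂ) + y * Complex.I) - 1))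
      - Complex.I • (∫ y in (0:ℝ)..π, (Complex.I * y) ^ (n-1) / (Complex.exp (Complex.I * y) - 1)) = 0 := by
  have hπ := Real.pi_pos
  set g : ℂ → ℂ := fun z => z ^ (n-2) * hfun z with hg
  have Hc : ContinuousOn g (uIcc (0:ℝ) R ×ℂ uIcc (0:ℝ) π) := by
    intro z hz
    rw [Complex.mem_reProdIm] at hz
    rcases eq_or_ne z 0 with rfl | hz0
    · exact ((continuous_pow _).continuousAt.mul hfun_continuousAt_zero).continuousWithinAt
    · have him := hz.2
      rw [uIcc_of_le hπ.le] at him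
      exact ((continuous_pow _).continuousAt.mul
        (hfun_continuousAt hz0 (exp_ne_one_of_im hz0 him.1 him.2))).continuousWithinAt
  have Hd : ∀ z ∈ (Ioo (min (0:ℝ) R) (max (0:ℝ) R) ×ℂ Ioo (min (0:ℝ) π) (max (0:ℝ) π)) \ (∅ : Set ℂ),
      DifferentiableAt ℂ g z := by
    intro z hz
    have hz' := hz.1
    rw [Complex.mem_reProdIm, min_eq_left hπ.le, max_eq_right hπ.le] at hz'
    have him := hz'.2
    have hz0 : z ≠ 0 := by
      intro h; rw [h] at him; simpa using him.1
    exact (differentiableAt_pow _).mul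
      (hfun_differentiableAt hz0 (exp_ne_one_of_im hz0 him.1.le him.2.le))
  have key := Complex.integral_boundary_rect_eq_zero_of_differentiable_on_off_countable
    g 0 ((R:ℂ) + π * Complex.I) ∅ countable_empty (by simpa using Hc) (by simpa using Hd)
  simp only [Complex.zero_re, Complex.zero_im, Complex.add_re, Complex.add_im,
    Complex.ofReal_re, Complex.ofReal_im, Complex.mul_re, Complex.mul_im, Complex.I_re,
    Complex.I_im, mul_zero, mul_one, zero_mul, sub_zero, add_zero, zero_add,
    Complex.ofReal_zero, zero_sub, neg_zero] at key
  have e1 : (∫ x in (0:ℝ)..R, g x) = ∫ x in (0:ℝ)..R, (x:ℂ) ^ (n-1) / (Complex.exp x - 1) := by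
    apply intervalIntegral.integral_congr_ae
    refine Filter.Eventually.of_forall fun x hx => ?_
    rw [Set.uIoc_of_le hR.le] at hx
    exact gfun_eq hn (Complex.ofReal_ne_zero.mpr hx.1.ne')
  have e2 : (∫ x in (0:ℝ)..R, g ((x:ℂ) + π * Complex.I))
      = ∫ x in (0:ℝ)..R, ((x:ℂ) + Complex.I * π) ^ (n-1) / (Complex.exp ((x:ℂ) + Complex.I * π) - 1) := by
    apply intervalIntegral.integral_congr
    intro x _
    have hz0 : (x:ℂ) + ↑π * Complex.I ≠ 0 := by
      intro h
      have := congrArg Complex.im h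
      simp at this
    rw [hg]; dsimp only
    rw [gfun_eq hn hz0, mul_comm (↑π : ℂ) Complex.I]
  have e3 : (∫ y in (0:ℝ)..π, g ((R:ℂ) + y * Complex.I))
      = ∫ y in (0:ℝ)..π, ((R:ℂ) + y * Complex.I) ^ (n-1) / (Complex.exp ((R:ℂ) + y * Complex.I) - 1) := by
    apply intervalIntegral.integral_congr
    intro y _
    have hz0 : (R:ℂ) + ↑y * Complex.I ≠ 0 := by
      intro h
      have := congrArg Complex.re h
      simp at this
      exact hR.ne' this
    rw [hg]; dsimp only
    rw [gfun_eq hn hz0]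
  have e4 : (∫ y in (0:ℝ)..π, g ((y:ℂ) * Complex.I))
      = ∫ y in (0:ℝ)..π, (Complex.I * y) ^ (n-1) / (Complex.exp (Complex.I * y) - 1) := by
    apply intervalIntegral.integral_congr_ae
    refine Filter.Eventually.of_forall fun y hy => ?_
    rw [Set.uIoc_of_le hπ.le] at hy
    have hz0 : (y:ℂ) * Complex.I ≠ 0 := by
      simp [Complex.ofReal_ne_zero, hy.1.ne']
    rw [hg]; dsimp only
    rw [gfun_eq hn hz0, mul_comm ((y:ℂ)) Complex.I]
  rw [e1, e2, e3, e4] at key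
  exact key

lemma meas_f (n : ℕ) : AEStronglyMeasurable (fun x : ℝ => (x:ℂ) ^ (n-1) / (Complex.exp x - 1)) volume := by
  apply Measurable.aestronglyMeasurable
  exact ((Complex.measurable_ofReal.pow measurable_const).div
    ((Complex.measurable_ofReal.cexp).sub measurable_const))

lemma norm_f {n : ℕ} {x : ℝ} (hx : 0 < x) :
    ‖(x:ℂ) ^ (n-1) / (Complex.exp x - 1)‖ = x ^ (n-1) / (Real.exp x - 1) := by
  have h1 : (1:ℝ) < Real.exp x := by
    rw [← Real.exp_zero]; exact Real.exp_lt_exp.mpr hx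
  rw [norm_div, norm_pow]
  have : (Complex.exp x - 1) = ((Real.exp x - 1 : ℝ) : ℂ) := by push_cast; ring
  rw [this, Complex.norm_real, Complex.norm_real,
    Real.norm_eq_abs, Real.norm_eq_abs,
    abs_of_pos hx, abs_of_pos (by linarith : (0:ℝ) < Real.exp x - 1)]

lemma intA (n : ℕ) (hn : 2 ≤ n) :
    IntegrableOn (fun x : ℝ => (x:ℂ) ^ (n-1) / (Complex.exp x - 1)) (Ioi 0) := by
  rw [← Ioc_union_Ioi_eq_Ioi (zero_le_one : (0:ℝ) ≤ 1), integrableOn_union]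
  constructor
  · apply Measure.integrableOn_of_bounded (M := 1) (by simp) (meas_f n)
    rw [ae_restrict_iff' measurableSet_Ioc]
    refine Eventually.of_forall fun x hx => ?_
    rw [norm_f hx.1]
    have h1 : x ≤ Real.exp x - 1 := by linarith [Real.add_one_le_exp x]
    have hd : (0:ℝ) < x := hx.1
    calc x ^ (n-1) / (Real.exp x - 1) ≤ x ^ (n-1) / x := by gcongr
      _ = x ^ (n-2) := by
          rw [show n-1 = n-2+1 by omega, pow_succ, mul_div_assoc, div_self hd.ne', mul_one]
      _ ≤ 1 := pow_le_one₀ hd.le hx.2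
  · have hg : IntegrableOn (fun x : ℝ => 2 * (Real.exp (-x) * x ^ ((n:ℝ) - 1))) (Ioi 1) :=
      ((Real.GammaIntegral_convergent (by positivity : (0:ℝ) < (n:ℝ))).mono_set
        (Ioi_subset_Ioi zero_le_one)).const_mul 2
    apply hg.mono' (meas_f n).restrict
    rw [ae_restrict_iff' measurableSet_Ioi]
    refine Eventually.of_forall fun x hx => ?_
    have hx1 : (1:ℝ) < x := hx
    have hx0 : (0:ℝ) < x := by linarith
    have he2 : (2:ℝ) ≤ Real.exp x := by
      calc (2:ℝ) ≤ Real.exp 1 := by linarith [Real.add_one_le_exp 1]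
        _ ≤ Real.exp x := Real.exp_le_exp.mpr hx1.le
    have hrpow : x ^ ((n:ℝ) - 1) = x ^ (n-1 : ℕ) := by
      rw [show ((n:ℝ) - 1) = ((n-1 : ℕ) : ℝ) by push_cast [Nat.cast_sub (by omega : 1 ≤ n)]; ring]
      exact Real.rpow_natCast x (n-1)
    rw [norm_f hx0, hrpow]
    calc x ^ (n-1) / (Real.exp x - 1) ≤ x ^ (n-1) / (Real.exp x / 2) := by
          gcongr
          linarith
      _ = 2 * (Real.exp (-x) * x ^ (n-1)) := by
          rw [Real.exp_neg]
          field_simp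

lemma pow_add_le_aux {a b : ℝ} (ha : 0 ≤ a) (hb : 0 ≤ b) (m : ℕ) :
    (a + b) ^ m ≤ 2 ^ m * (a ^ m + b ^ m) := by
  rcases le_total a b with h | h
  · calc (a + b) ^ m ≤ (2 * b) ^ m := by gcongr; linarith
      _ = 2 ^ m * b ^ m := mul_pow 2 b m
      _ ≤ 2 ^ m * (a ^ m + b ^ m) := by
          have := pow_nonneg ha m
          have : (0:ℝ) ≤ 2 ^ m := by positivity
          nlinarith [pow_nonneg ha m]
  · calc (a + b) ^ m ≤ (2 * a) ^ m := by gcongr; linarith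
      _ = 2 ^ m * a ^ m := mul_pow 2 a m
      _ ≤ 2 ^ m * (a ^ m + b ^ m) := by
          nlinarith [pow_nonneg hb m, (by positivity : (0:ℝ) ≤ (2:ℝ) ^ m)]

lemma denomB (x : ℝ) : Complex.exp ((x:ℂ) + Complex.I * π) - 1 = -((Real.exp x : ℝ) + 1 : ℝ) := by
  rw [Complex.exp_add, mul_comm Complex.I (π:ℂ), Complex.exp_pi_mul_I]
  push_cast
  ring

lemma meas_fB (n : ℕ) : AEStronglyMeasurable
    (fun x : ℝ => ((x:ℂ) + Complex.I * π) ^ (n-1) / (Complex.exp ((x:ℂ) + Complex.I * π) - 1))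
    volume := by
  apply Measurable.aestronglyMeasurable
  exact (((Complex.measurable_ofReal.add_const _).pow measurable_const).div
    (((Complex.measurable_ofReal.add_const _).cexp).sub measurable_const))

lemma intB (n : ℕ) (hn : 2 ≤ n) :
    IntegrableOn (fun x : ℝ =>
      ((x:ℂ) + Complex.I * π) ^ (n-1) / (Complex.exp ((x:ℂ) + Complex.I * π) - 1)) (Ioi 0) := by
  have hπ := Real.pi_pos
  have hg : IntegrableOn (fun x : ℝ =>
      2 ^ (n-1) * (Real.exp (-x) * x ^ ((n:ℝ) - 1)) + (2 ^ (n-1) * π ^ (n-1)) * Real.exp (-1 * x))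
      (Ioi 0) := by
    exact Integrable.add
      ((Real.GammaIntegral_convergent (by positivity : (0:ℝ) < (n:ℝ))).const_mul _)
      ((exp_neg_integrableOn_Ioi 0 one_pos).const_mul _)
  apply hg.mono' (meas_fB n).restrict
  rw [ae_restrict_iff' measurableSet_Ioi]
  refine Eventually.of_forall fun x hx => ?_
  have hx0 : (0:ℝ) < x := hx
  have hrpow : x ^ ((n:ℝ) - 1) = x ^ (n-1 : ℕ) := by
    rw [show ((n:ℝ) - 1) = ((n-1 : ℕ) : ℝ) by push_cast [Nat.cast_sub (by omega : 1 ≤ n)]; ring]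
    exact Real.rpow_natCast x (n-1)
  rw [norm_div, norm_pow, denomB x]
  have hnum : ‖(x:ℂ) + Complex.I * π‖ ≤ x + π := by
    calc ‖(x:ℂ) + Complex.I * π‖ ≤ ‖(x:ℂ)‖ + ‖Complex.I * (π:ℂ)‖ := norm_add_le _ _
      _ = x + π := by
          simp [Complex.norm_real, Real.norm_eq_abs, abs_of_pos hx0, abs_of_pos hπ]
  have hden : ‖(-((Real.exp x : ℝ) + 1 : ℝ) : ℂ)‖ = Real.exp x + 1 := by
    rw [norm_neg, Complex.norm_real, Real.norm_eq_abs,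
      abs_of_pos (by positivity : (0:ℝ) < Real.exp x + 1)]
  rw [hden, hrpow]
  have hexp : (0:ℝ) < Real.exp x := Real.exp_pos x
  calc ‖(x:ℂ) + Complex.I * π‖ ^ (n-1) / (Real.exp x + 1)
      ≤ (x + π) ^ (n-1) / Real.exp x := by
        gcongr
        linarith
    _ ≤ (2 ^ (n-1) * (x ^ (n-1) + π ^ (n-1))) / Real.exp x := by
        gcongr
        exact pow_add_le_aux hx0.le hπ.le (n-1)
    _ = 2 ^ (n-1) * (Real.exp (-x) * x ^ (n-1)) + (2 ^ (n-1) * π ^ (n-1)) * Real.exp (-1 * x) := by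
        rw [Real.exp_neg, show (-1 : ℝ) * x = -x by ring, Real.exp_neg]
        field_simp

lemma vanish (n : ℕ) :
    Tendsto (fun R : ℝ => ∫ y in (0:ℝ)..π,
        ((R:ℂ) + y * Complex.I) ^ (n-1) / (Complex.exp ((R:ℂ) + y * Complex.I) - 1))
      atTop (𝓝 0) := by
  have hπ := Real.pi_pos
  apply squeeze_zero_norm' (a := fun R : ℝ => 2 * ((R + π) ^ (n-1) * Real.exp (-R)) * |π - 0|)
  · filter_upwards [eventually_ge_atTop (1:ℝ)] with R hR
    apply intervalIntegral.norm_integral_le_of_norm_le_const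
    intro y hy
    rw [Set.uIoc_of_le hπ.le] at hy
    have hR0 : (0:ℝ) < R := by linarith
    have he2 : (2:ℝ) ≤ Real.exp R := by
      calc (2:ℝ) ≤ Real.exp 1 := by linarith [Real.add_one_le_exp 1]
        _ ≤ Real.exp R := Real.exp_le_exp.mpr hR
    have hnum : ‖(R:ℂ) + y * Complex.I‖ ≤ R + π := by
      calc ‖(R:ℂ) + y * Complex.I‖ ≤ ‖(R:ℂ)‖ + ‖(y:ℂ) * Complex.I‖ := norm_add_le _ _
        _ ≤ R + π := by
            simp [Complex.norm_real, Real.norm_eq_abs, abs_of_pos hR0, abs_of_pos hy.1]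
            exact hy.2
    have hden : Real.exp R - 1 ≤ ‖Complex.exp ((R:ℂ) + y * Complex.I) - 1‖ := by
      have h1 : ‖Complex.exp ((R:ℂ) + y * Complex.I)‖ = Real.exp R := by
        rw [Complex.norm_exp]
        congr 1
        simp
      calc Real.exp R - 1 = ‖Complex.exp ((R:ℂ) + y * Complex.I)‖ - ‖(1:ℂ)‖ := by
            rw [h1, norm_one]
        _ ≤ ‖Complex.exp ((R:ℂ) + y * Complex.I) - 1‖ := norm_sub_norm_le _ _
    rw [norm_div, norm_pow]
    calc ‖(R:ℂ) + y * Complex.I‖ ^ (n-1) / ‖Complex.exp ((R:ℂ) + y * Complex.I) - 1‖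
        ≤ (R + π) ^ (n-1) / (Real.exp R / 2) := by
          gcongr
          linarith
      _ = 2 * ((R + π) ^ (n-1) * Real.exp (-R)) := by
          rw [Real.exp_neg]
          field_simp
  · have h0 : Tendsto (fun R : ℝ => (R + π) ^ (n-1) * Real.exp (-(R + π))) atTop (𝓝 0) :=
      (Real.tendsto_pow_mul_exp_neg_atTop_nhds_zero (n-1)).comp
        (tendsto_atTop_add_const_right atTop π tendsto_id)
    have h1 := h0.const_mul (2 * Real.exp π * |π - 0|)
    rw [mul_zero] at h1
    refine h1.congr fun R => ?_
    rw [show -(R + π) = -R + -π by ring, Real.exp_add, Real.exp_neg π]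
    have := Real.exp_ne_zero π
    field_simp


/-- For every integer `n ≥ 2`,
`∫₀^∞ x^(n-1)/(e^x-1) dx − ∫₀^∞ (x+iπ)^(n-1)/(e^(x+iπ)-1) dx
  = i ∫₀^π (iy)^(n-1)/(e^(iy)-1) dy`. -/
theorem limit_contour_identity (n : ℕ) (hn : 2 ≤ n) :
    (∫ x in Set.Ioi (0 : ℝ), (x : ℂ) ^ (n - 1) / (Complex.exp x - 1)) -
      (∫ x in Set.Ioi (0 : ℝ),
        ((x : ℂ) + Complex.I * π) ^ (n - 1) / (Complex.exp ((x : ℂ) + Complex.I * π) - 1)) =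
      Complex.I * ∫ y in (0 : ℝ)..π,
        (Complex.I * y) ^ (n - 1) / (Complex.exp (Complex.I * y) - 1) := by
  set L : ℂ := ∫ y in (0:ℝ)..π, (Complex.I * y) ^ (n-1) / (Complex.exp (Complex.I * y) - 1) with hL
  set A : ℂ := ∫ x in Set.Ioi (0:ℝ), (x:ℂ) ^ (n-1) / (Complex.exp x - 1) with hA
  set B : ℂ := ∫ x in Set.Ioi (0:ℝ),
    ((x:ℂ) + Complex.I * π) ^ (n-1) / (Complex.exp ((x:ℂ) + Complex.I * π) - 1) with hB
  have tA := MeasureTheory.intervalIntegral_tendsto_integral_Ioi 0 (intA n hn) tendsto_id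
  have tB := MeasureTheory.intervalIntegral_tendsto_integral_Ioi 0 (intB n hn) tendsto_id
  have hsub : Tendsto (fun R : ℝ => (∫ x in (0:ℝ)..R, (x:ℂ) ^ (n-1) / (Complex.exp x - 1))
      - (∫ x in (0:ℝ)..R,
          ((x:ℂ) + Complex.I * π) ^ (n-1) / (Complex.exp ((x:ℂ) + Complex.I * π) - 1)))
      atTop (𝓝 (A - B)) := tA.sub tB
  have hrhs : Tendsto (fun R : ℝ => Complex.I • L - Complex.I • (∫ y in (0:ℝ)..π,
        ((R:ℂ) + y * Complex.I) ^ (n-1) / (Complex.exp ((R:ℂ) + y * Complex.I) - 1)))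
      atTop (𝓝 (Complex.I • L - Complex.I • (0:ℂ))) :=
    tendsto_const_nhds.sub ((vanish n).const_smul Complex.I)
  have heq : (fun R : ℝ => (∫ x in (0:ℝ)..R, (x:ℂ) ^ (n-1) / (Complex.exp x - 1))
      - (∫ x in (0:ℝ)..R,
          ((x:ℂ) + Complex.I * π) ^ (n-1) / (Complex.exp ((x:ℂ) + Complex.I * π) - 1)))
      =ᶠ[atTop] (fun R : ℝ => Complex.I • L - Complex.I • (∫ y in (0:ℝ)..π,
        ((R:ℂ) + y * Complex.I) ^ (n-1) / (Complex.exp ((R:ℂ) + y * Complex.I) - 1))) := by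
    filter_upwards [eventually_gt_atTop (0:ℝ)] with R hR
    have key := rect_eq n hn hR
    rw [← hL] at key
    simp only [smul_eq_mul] at key ⊢
    linear_combination key
  have := tendsto_nhds_unique (Filter.Tendsto.congr' heq hsub) hrhs
  rw [smul_zero, sub_zero, smul_eq_mul] at this
  exact this
end

section
/- The case n = 2 of the contour identity reads: ζ(2) + (1/2)·ζ(2) + iπ ∫₀^∞ 1/(e^x + 1) dx = ∫₀^π (y/2) dy + (i/2) ∫₀^π (y·sin y)/(1 − cos y) dy, as an identity of complex numbers. -/
open scoped Real
open MeasureTheory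

section AuxContour
open Real Set

lemma neg_log_le_rpow {x : ℝ} (hx : 0 < x) : -Real.log x ≤ 2 * x ^ (-(1/2) : ℝ) := by
  have h1 : Real.log (x ^ (-(1/2) : ℝ)) ≤ x ^ (-(1/2) : ℝ) - 1 :=
    Real.log_le_sub_one_of_pos (Real.rpow_pos_of_pos hx _)
  rw [Real.log_rpow hx] at h1
  nlinarith [Real.rpow_pos_of_pos hx (-(1/2) : ℝ)]

lemma ii_log_sin : IntervalIntegrable (fun x => Real.log (Real.sin x)) volume 0 (π/2) := by
  have hpi := Real.pi_pos
  rw [intervalIntegrable_iff_integrableOn_Ioc_of_le (by positivity)]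
  have hg : IntegrableOn (fun x : ℝ => Real.log (π/2) + 2 * x ^ (-(1/2) : ℝ)) (Ioc 0 (π/2)) := by
    rw [← intervalIntegrable_iff_integrableOn_Ioc_of_le (by positivity)]
    exact intervalIntegrable_const.add ((intervalIntegral.intervalIntegrable_rpow' (by norm_num)).const_mul 2)
  refine Integrable.mono hg ((Real.measurable_log.comp Real.measurable_sin).aestronglyMeasurable) ?_
  rw [ae_restrict_iff' measurableSet_Ioc]
  filter_upwards with x hx
  obtain ⟨hx0, hx2⟩ := hx
  have hsle : Real.sin x ≤ 1 := Real.sin_le_one x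
  have hslb : 2 / π * x ≤ Real.sin x := Real.mul_le_sin hx0.le hx2
  have hxp : 0 < 2 / π * x := by positivity
  have hs0 : 0 < Real.sin x := lt_of_lt_of_le hxp hslb
  have hlogs : Real.log (Real.sin x) ≤ 0 := Real.log_nonpos hs0.le hsle
  have h2 : -Real.log (Real.sin x) ≤ -Real.log (2 / π * x) := by
    have := Real.log_le_log hxp hslb
    linarith
  have h3 : -Real.log (2 / π * x) = Real.log (π/2) - Real.log x := by
    rw [Real.log_mul (by positivity) hx0.ne', Real.log_div two_ne_zero hpi.ne',
      Real.log_div hpi.ne' two_ne_zero]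
    ring
  have h4 : -Real.log x ≤ 2 * x ^ (-(1/2) : ℝ) := neg_log_le_rpow hx0
  have hgpos : 0 ≤ Real.log (π/2) + 2 * x ^ (-(1/2) : ℝ) := by
    have : (0:ℝ) ≤ Real.log (π/2) := Real.log_nonneg (by linarith [Real.pi_gt_three])
    have := (Real.rpow_pos_of_pos hx0 (-(1/2) : ℝ)).le
    positivity
  rw [Real.norm_eq_abs, Real.norm_eq_abs, abs_of_nonpos hlogs, abs_of_nonneg hgpos]
  linarith

lemma ii_log_cos : IntervalIntegrable (fun x => Real.log (Real.cos x)) volume 0 (π/2) := by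
  have h := (ii_log_sin.comp_sub_left (π/2)).symm
  simp only [sub_zero, sub_self] at h
  have : (fun x => Real.log (Real.sin (π/2 - x))) = fun x => Real.log (Real.cos x) := by
    funext x; rw [Real.sin_pi_div_two_sub]
  rwa [this] at h

lemma ii_log_sin_pi : IntervalIntegrable (fun x => Real.log (Real.sin x)) volume 0 π := by
  have h2 : IntervalIntegrable (fun x => Real.log (Real.sin x)) volume (π/2) π := by
    have h := ii_log_sin.comp_sub_left π
    simp only [sub_zero] at h
    have he : (fun x => Real.log (Real.sin (π - x))) = fun x => Real.log (Real.sin x) := by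
      funext x; rw [Real.sin_pi_sub]
    rw [he] at h
    have : π - π/2 = π/2 := by ring
    rw [this] at h
    exact h.symm
  exact ii_log_sin.trans h2

lemma integral_log_sin_half : ∫ x in (0:ℝ)..(π/2), Real.log (Real.sin x)
    = -(π/2) * Real.log 2 := by
  have hpi := Real.pi_pos
  set I := ∫ x in (0:ℝ)..(π/2), Real.log (Real.sin x) with hI
  -- cos integral equals I
  have hcos : ∫ x in (0:ℝ)..(π/2), Real.log (Real.cos x) = I := by
    have h := intervalIntegral.integral_comp_sub_left
      (a := (0:ℝ)) (b := π/2) (fun x => Real.log (Real.sin x)) (π/2)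
    simp only [sub_zero, sub_self] at h
    rw [hI, ← h]
    congr 1; funext x; rw [Real.sin_pi_div_two_sub]
  -- second half equals I
  have hsecond : ∫ x in (π/2:ℝ)..π, Real.log (Real.sin x) = I := by
    have h := intervalIntegral.integral_comp_sub_left
      (a := (0:ℝ)) (b := π/2) (fun x => Real.log (Real.sin x)) π
    simp only [sub_zero] at h
    have : π - π/2 = π/2 := by ring
    rw [this] at h
    rw [← h]
    congr 1; funext x; rw [Real.sin_pi_sub]
  -- doubled integral
  have hsub : IntervalIntegrable (fun x => Real.log (Real.sin x)) volume (π/2) π := by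
    apply ii_log_sin_pi.mono_set
    rw [Set.uIcc_of_le (by linarith), Set.uIcc_of_le hpi.le]
    exact Set.Icc_subset_Icc (by positivity) le_rfl
  have hdouble : ∫ x in (0:ℝ)..(π/2), Real.log (Real.sin (2*x)) = I := by
    have h := intervalIntegral.integral_comp_mul_left
      (a := (0:ℝ)) (b := π/2) (fun x => Real.log (Real.sin x)) (c := 2) two_ne_zero
    simp only [mul_zero] at h
    have h2 : (2:ℝ) * (π/2) = π := by ring
    rw [h2] at h
    rw [h, ← intervalIntegral.integral_add_adjacent_intervals ii_log_sin hsub, hsecond]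
    simp only [smul_eq_mul, ← hI]
    ring
  -- a.e. identity
  have hae : ∀ᵐ x : ℝ, x ∈ Set.uIoc (0:ℝ) (π/2) →
      Real.log (Real.sin x) + Real.log (Real.cos x)
        = Real.log (Real.sin (2*x)) - Real.log 2 := by
    have hne : ∀ᵐ x : ℝ, x ≠ π/2 := by
      rw [MeasureTheory.ae_iff]
      have : {x : ℝ | ¬x ≠ π/2} = {π/2} := by ext x; simp
      rw [this]; exact Real.volume_singleton
    filter_upwards [hne] with x hx hmem
    rw [Set.uIoc_of_le (by positivity)] at hmem
    obtain ⟨hx0, hx2⟩ := hmem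
    have hx2' : x < π/2 := lt_of_le_of_ne hx2 hx
    have hs : 0 < Real.sin x := Real.sin_pos_of_pos_of_lt_pi hx0 (by linarith)
    have hc : 0 < Real.cos x := Real.cos_pos_of_mem_Ioo ⟨by linarith, hx2'⟩
    rw [Real.sin_two_mul, Real.log_mul (by positivity) hc.ne',
      Real.log_mul two_ne_zero hs.ne']
    ring
  have hsplit : I + I = I - (π/2) * Real.log 2 := by
    calc I + I = ∫ x in (0:ℝ)..(π/2),
          (Real.log (Real.sin x) + Real.log (Real.cos x)) := by
          rw [intervalIntegral.integral_add ii_log_sin ii_log_cos, hcos]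
      _ = ∫ x in (0:ℝ)..(π/2), (Real.log (Real.sin (2*x)) - Real.log 2) :=
          intervalIntegral.integral_congr_ae hae
      _ = (∫ x in (0:ℝ)..(π/2), Real.log (Real.sin (2*x)))
            - ∫ x in (0:ℝ)..(π/2), (Real.log 2 : ℝ) := by
          refine intervalIntegral.integral_sub ?_ intervalIntegrable_const
          have h := ii_log_sin_pi.comp_mul_left (c := 2) (by simp) (by simp)
          simpa using h
      _ = I - (π/2) * Real.log 2 := by
          rw [hdouble, intervalIntegral.integral_const]
          simp [smul_eq_mul]
  linarith

lemma integral_log_sin_half_pi : ∫ y in (0:ℝ)..π, Real.log (Real.sin (y/2))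
    = -π * Real.log 2 := by
  have h := intervalIntegral.integral_comp_div
    (a := (0:ℝ)) (b := π) (fun x => Real.log (Real.sin x)) (c := 2) two_ne_zero
  rw [h]
  norm_num [integral_log_sin_half]
  ring

lemma ii_log_sin_half : IntervalIntegrable (fun y => Real.log (Real.sin (y/2)))
    volume 0 π := by
  have h := ii_log_sin.comp_mul_right (c := (1/2 : ℝ))
  simp only [mul_one_div] at h
  have h0 : (0:ℝ)/(1/2) = 0 := by norm_num
  have h2 : (π/2) / (1/2 : ℝ) = π := by ring
  rw [h0, h2] at h
  exact h

lemma sin_half_lb {y : ℝ} (h0 : 0 < y) (h1 : y ≤ π) : y / π ≤ Real.sin (y/2) := by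
  have := Real.mul_le_sin (x := y/2) (by positivity) (by linarith)
  calc y / π = 2/π * (y/2) := by field_simp
    _ ≤ Real.sin (y/2) := this

lemma one_sub_cos {y : ℝ} : 1 - Real.cos y = 2 * Real.sin (y/2)^2 := by
  have h := Real.sin_sq_eq_half_sub (y/2)
  rw [show 2*(y/2) = y by ring] at h
  linarith

lemma sin_eq_double {y : ℝ} : Real.sin y = 2 * Real.sin (y/2) * Real.cos (y/2) := by
  have h := Real.sin_two_mul (y/2)
  rw [show 2*(y/2) = y by ring] at h
  linarith

lemma ii_target : IntervalIntegrable (fun y => y * Real.sin y / (1 - Real.cos y))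
    volume 0 π := by
  have hpi := Real.pi_pos
  rw [intervalIntegrable_iff_integrableOn_Ioc_of_le hpi.le]
  refine MeasureTheory.Measure.integrableOn_of_bounded (M := π^2/2) measure_Ioc_lt_top.ne
    ((measurable_id.mul Real.measurable_sin).div
      (measurable_const.sub Real.measurable_cos)).aestronglyMeasurable ?_
  · rw [ae_restrict_iff' measurableSet_Ioc]
    filter_upwards with y hy
    obtain ⟨h0, h1⟩ := hy
    have hs : y / π ≤ Real.sin (y/2) := sin_half_lb h0 h1
    have hsp : 0 < Real.sin (y/2) := lt_of_lt_of_le (by positivity) hs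
    have hden : 2 * (y/π)^2 ≤ 1 - Real.cos y := by
      rw [one_sub_cos]
      have hyp : (0:ℝ) < y / π := by positivity
      have : (y/π)^2 ≤ Real.sin (y/2)^2 := by nlinarith
      linarith
    have hdenpos : (0:ℝ) < 2 * (y/π)^2 := by positivity
    have hnum : y * Real.sin y ≤ y^2 := by
      have := Real.sin_le h0.le
      nlinarith
    have hnum0 : 0 ≤ y * Real.sin y := by
      have := Real.sin_nonneg_of_nonneg_of_le_pi h0.le h1
      positivity
    have hden2 : (0:ℝ) < 1 - Real.cos y := lt_of_lt_of_le hdenpos hden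
    rw [Real.norm_eq_abs, abs_of_nonneg (div_nonneg hnum0 hden2.le)]
    calc y * Real.sin y / (1 - Real.cos y) ≤ y^2 / (2 * (y/π)^2) :=
          div_le_div₀ (by positivity) hnum hdenpos hden
      _ = π^2/2 := by field_simp

lemma tendsto_F : Filter.Tendsto (fun y : ℝ => 2 * y * Real.log (Real.sin (y/2)))
    (nhdsWithin 0 (Set.Ioi 0)) (nhds 0) := by
  have hpi := Real.pi_pos
  have t1 : Filter.Tendsto (fun y : ℝ => Real.log y * y) (nhdsWithin 0 (Set.Ioi 0)) (nhds 0) := by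
    simpa using tendsto_log_mul_rpow_nhdsGT_zero one_pos
  have t2 : Filter.Tendsto (fun y : ℝ => y) (nhdsWithin 0 (Set.Ioi 0)) (nhds 0) :=
    (continuous_id.tendsto 0).mono_left nhdsWithin_le_nhds
  have tlow : Filter.Tendsto (fun y : ℝ => 2 * (Real.log y * y) - 2 * Real.log π * y)
      (nhdsWithin 0 (Set.Ioi 0)) (nhds 0) := by
    have := ((t1.const_mul 2).sub ((t2.const_mul (2 * Real.log π))))
    simpa using this
  refine tendsto_of_tendsto_of_tendsto_of_le_of_le' tlow tendsto_const_nhds ?_ ?_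
  · filter_upwards [Ioc_mem_nhdsGT hpi] with y hy
    obtain ⟨h0, h1⟩ := hy
    have hs : y / π ≤ Real.sin (y/2) := sin_half_lb h0 h1
    have hsp : 0 < Real.sin (y/2) := lt_of_lt_of_le (by positivity) hs
    have hlog : Real.log (y/π) ≤ Real.log (Real.sin (y/2)) :=
      Real.log_le_log (by positivity) hs
    rw [Real.log_div h0.ne' hpi.ne'] at hlog
    nlinarith
  · filter_upwards [Ioc_mem_nhdsGT hpi] with y hy
    obtain ⟨h0, h1⟩ := hy
    have : Real.log (Real.sin (y/2)) ≤ 0 :=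
      Real.log_nonpos (Real.sin_nonneg_of_nonneg_of_le_pi (by positivity)
        (by linarith)) (Real.sin_le_one _)
    nlinarith

lemma contF : ContinuousOn (fun y : ℝ => 2 * y * Real.log (Real.sin (y/2)))
    (Set.Icc 0 π) := by
  have hpi := Real.pi_pos
  intro y hy
  rcases eq_or_ne y 0 with rfl | hne
  · rw [← continuousWithinAt_diff_self]
    have hsub : Set.Icc (0:ℝ) π \ {0} ⊆ Set.Ioi 0 := fun z hz =>
      lt_of_le_of_ne hz.1.1 (Ne.symm hz.2)
    have ht : Filter.Tendsto (fun y : ℝ => 2 * y * Real.log (Real.sin (y/2)))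
        (nhdsWithin 0 (Set.Icc 0 π \ {0})) (nhds 0) :=
      tendsto_F.mono_left (nhdsWithin_mono _ hsub)
    unfold ContinuousWithinAt
    simpa using ht
  · have hy0 : 0 < y := lt_of_le_of_ne hy.1 (Ne.symm hne)
    have hsp : 0 < Real.sin (y/2) :=
      Real.sin_pos_of_pos_of_lt_pi (by positivity) (by linarith [hy.2])
    apply ContinuousAt.continuousWithinAt
    have hc1 : ContinuousAt (fun y : ℝ => Real.sin (y/2)) y :=
      (Real.continuous_sin.comp (continuous_id.div_const 2)).continuousAt
    have hc3 : ContinuousAt (fun y : ℝ => Real.log (Real.sin (y/2))) y :=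
      ContinuousAt.comp (f := fun y : ℝ => Real.sin (y/2)) (Real.continuousAt_log hsp.ne') hc1
    exact ((continuous_const.mul continuous_id).continuousAt).mul hc3

lemma derivF {y : ℝ} (hy : y ∈ Set.Ioo 0 π) :
    HasDerivAt (fun y : ℝ => 2 * y * Real.log (Real.sin (y/2)))
      (2 * Real.log (Real.sin (y/2)) + y * Real.sin y / (1 - Real.cos y)) y := by
  obtain ⟨h0, h1⟩ := hy
  have hsp : 0 < Real.sin (y/2) :=
    Real.sin_pos_of_pos_of_lt_pi (by positivity) (by linarith)
  have hs : HasDerivAt (fun y : ℝ => Real.sin (y/2)) (Real.cos (y/2) * (1/2)) y := by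
    have := (Real.hasDerivAt_sin (y/2)).comp y ((hasDerivAt_id y).div_const 2)
    exact this
  have hlog : HasDerivAt (fun y : ℝ => Real.log (Real.sin (y/2)))
      (Real.cos (y/2) * (1/2) / Real.sin (y/2)) y := hs.log hsp.ne'
  have hmul := ((hasDerivAt_id y).const_mul (2:ℝ)).mul hlog
  refine hmul.congr_deriv (Eq.symm ?_)
  have hden : 1 - Real.cos y = 2 * Real.sin (y/2)^2 := one_sub_cos
  have hnum : Real.sin y = 2 * Real.sin (y/2) * Real.cos (y/2) := sin_eq_double
  rw [hden, hnum]
  field_simp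
  simp only [id]; ring

lemma integral_g : ∫ y in (0:ℝ)..π,
    (2 * Real.log (Real.sin (y/2)) + y * Real.sin y / (1 - Real.cos y)) = 0 := by
  have hpi := Real.pi_pos
  have hii : IntervalIntegrable
      (fun y => 2 * Real.log (Real.sin (y/2)) + y * Real.sin y / (1 - Real.cos y))
      volume 0 π := (ii_log_sin_half.const_mul 2).add ii_target
  have h := intervalIntegral.integral_eq_sub_of_hasDeriv_right_of_le hpi.le contF
    (fun x hx => (derivF hx).hasDerivWithinAt) hii
  rw [h]
  norm_num [Real.sin_pi_div_two]

lemma int2 : ∫ y in (0:ℝ)..π, y * Real.sin y / (1 - Real.cos y) = 2 * π * Real.log 2 := by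
  have h := integral_g
  rw [intervalIntegral.integral_add (ii_log_sin_half.const_mul 2) ii_target,
    intervalIntegral.integral_const_mul, integral_log_sin_half_pi] at h
  linarith

lemma int1 : ∫ x in Set.Ioi (0:ℝ), 1 / (Real.exp x + 1) = Real.log 2 := by
  have hderiv : ∀ x ∈ Set.Ioi (0:ℝ),
      HasDerivAt (fun x => x - Real.log (Real.exp x + 1)) (1 / (Real.exp x + 1)) x := by
    intro x _
    have he : 0 < Real.exp x + 1 := by positivity
    have h := (hasDerivAt_id x).sub (((Real.hasDerivAt_exp x).add_const 1).log he.ne')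
    refine h.congr_deriv (Eq.symm ?_)
    field_simp
    ring
  have hcont : ContinuousWithinAt (fun x => x - Real.log (Real.exp x + 1)) (Set.Ici 0) 0 := by
    apply ContinuousAt.continuousWithinAt
    exact continuous_id.continuousAt.sub ((Real.continuousAt_log (by positivity)).comp
      ((Real.continuous_exp.add continuous_const).continuousAt))
  have hpos : ∀ x ∈ Set.Ioi (0:ℝ), 0 ≤ 1 / (Real.exp x + 1) := by
    intro x _; positivity
  have htend : Filter.Tendsto (fun x => x - Real.log (Real.exp x + 1))
      Filter.atTop (nhds 0) := by
    have he : (fun x : ℝ => x - Real.log (Real.exp x + 1))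
        = fun x => -Real.log (1 + Real.exp (-x)) := by
      funext x
      have h1 : (1:ℝ) + Real.exp (-x) = (Real.exp x + 1) * Real.exp (-x) := by
        rw [add_mul, ← Real.exp_add]
        simp
      rw [h1, Real.log_mul (by positivity) (Real.exp_ne_zero _), Real.log_exp]
      ring
    rw [he]
    have h2 : Filter.Tendsto (fun x : ℝ => 1 + Real.exp (-x)) Filter.atTop (nhds 1) := by
      simpa using (tendsto_const_nhds (x := (1:ℝ))).add Real.tendsto_exp_neg_atTop_nhds_zero
    have h3 := (Real.continuousAt_log one_ne_zero).tendsto.comp h2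
    simp only [Real.log_one] at h3
    simpa using h3.neg
  have h := MeasureTheory.integral_Ioi_of_hasDerivAt_of_nonneg hcont hderiv hpos htend
  rw [h]
  norm_num

end AuxContour

open Real Set in
/-- The case `n = 2` of the contour identity:
`ζ(2) + ζ(2)/2 + iπ∫₀^∞ dx/(e^x+1) = ∫₀^π (y/2) dy + (i/2)∫₀^π y sin y/(1 - cos y) dy`. -/
theorem contour_identity_n_two :
    riemannZeta 2 + (1 / 2 : ℂ) * riemannZeta 2 +
      Complex.I * (π : ℂ) * ((∫ x in Set.Ioi (0 : ℝ), 1 / (Real.exp x + 1) : ℝ) : ℂ) =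
      ((∫ y in (0 : ℝ)..π, y / 2 : ℝ) : ℂ) +
        (Complex.I / 2) * ((∫ y in (0 : ℝ)..π, y * Real.sin y / (1 - Real.cos y) : ℝ) : ℂ) := by
  have h1 : ∫ y in (0:ℝ)..π, y / 2 = π^2/4 := by
    rw [intervalIntegral.integral_div, integral_id]
    ring
  rw [int1, int2, h1, riemannZeta_two]
  push_cast
  ring
end

section
/- For every positive integer n, the values of the Riemann zeta function at even integers satisfy the recursion Γ(2n)·ζ(2n) + Σ_{k=0}^{n−1} α(n,k)·ζ(2n−2k) = (−1)^{n−1} · π^{2n}/(4n), where α(n,k) = (1 − 2^{1−2n+2k}) · (−π²)^k · C(2n−1, 2k) · Γ(2n−2k) and C(m, j) denotes the binomial coefficient. -/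
open scoped Real
open Nat Finset PowerSeries


lemma lemA : PowerSeries.rescale (2:ℚ) (bernoulliPowerSeries ℚ) * (PowerSeries.exp ℚ + 1)
    = 2 * bernoulliPowerSeries ℚ := by
  have hexp : PowerSeries.exp ℚ - 1 ≠ 0 := by
    intro h
    have := congrArg (PowerSeries.coeff (R := ℚ) 1) h
    simp [PowerSeries.coeff_exp] at this
  apply mul_right_cancel₀ hexp
  have h2 : PowerSeries.exp ℚ * PowerSeries.exp ℚ = PowerSeries.rescale (2:ℚ) (PowerSeries.exp ℚ) := by
    have := PowerSeries.exp_mul_exp_eq_exp_add (1:ℚ) 1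
    norm_num at this; simpa [PowerSeries.rescale_one] using this
  calc PowerSeries.rescale (2:ℚ) (bernoulliPowerSeries ℚ) * (PowerSeries.exp ℚ + 1) * (PowerSeries.exp ℚ - 1)
      = PowerSeries.rescale (2:ℚ) (bernoulliPowerSeries ℚ) *
        (PowerSeries.rescale (2:ℚ) (PowerSeries.exp ℚ) - 1) := by ring_nf; rw [← h2]; ring
    _ = PowerSeries.rescale (2:ℚ) (bernoulliPowerSeries ℚ * (PowerSeries.exp ℚ - 1)) := by
        rw [map_mul, map_sub, map_one]
    _ = PowerSeries.rescale (2:ℚ) PowerSeries.X := by rw [bernoulliPowerSeries_mul_exp_sub_one]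
    _ = 2 * PowerSeries.X := by rw [PowerSeries.rescale_X]; rw [map_ofNat]
    _ = 2 * bernoulliPowerSeries ℚ * (PowerSeries.exp ℚ - 1) := by
        rw [mul_assoc, bernoulliPowerSeries_mul_exp_sub_one]

lemma lemB (m : ℕ) :
    ∑ k ∈ Finset.range (m+1), (m.choose k : ℚ) * 2^k * bernoulli k = (2 - 2^m) * bernoulli m := by
  have h := congrArg (PowerSeries.coeff (R := ℚ) m) lemA
  rw [show (2 : ℚ⟦X⟧) = PowerSeries.C (R := ℚ) 2 from (map_ofNat _ 2).symm, PowerSeries.coeff_C_mul] at h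
  simp only [mul_add, map_add, mul_one, PowerSeries.coeff_mul, PowerSeries.coeff_rescale,
    bernoulliPowerSeries, PowerSeries.coeff_mk, PowerSeries.coeff_exp, PowerSeries.coeff_C_mul,
    Algebra.algebraMap_self, RingHom.id_apply, one_div] at h
  rw [Finset.Nat.sum_antidiagonal_eq_sum_range_succ_mk] at h
  have hfac : ∀ j : ℕ, (j ! : ℚ) ≠ 0 := fun j => mod_cast j.factorial_ne_zero
  have key : ∑ k ∈ Finset.range (m+1), 2 ^ k * (bernoulli k / k !) * ((m - k)! : ℚ)⁻¹
      = 2 * (bernoulli m / m !) - 2 ^ m * (bernoulli m / m !) := by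
    linarith [h]
  calc ∑ k ∈ Finset.range (m+1), (m.choose k : ℚ) * 2^k * bernoulli k
      = ∑ k ∈ Finset.range (m+1),
          (m ! : ℚ) * (2 ^ k * (bernoulli k / k !) * ((m - k)! : ℚ)⁻¹) := by
        refine Finset.sum_congr rfl fun k hk => ?_
        rw [Finset.mem_range] at hk
        rw [Nat.cast_choose ℚ (by omega : k ≤ m)]
        field_simp
    _ = (m ! : ℚ) * ∑ k ∈ Finset.range (m+1), 2 ^ k * (bernoulli k / k !) * ((m - k)! : ℚ)⁻¹ := by
        rw [Finset.mul_sum]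
    _ = (2 - 2^m) * bernoulli m := by
        rw [key]
        field_simp

lemma even_sum (f : ℕ → ℚ) (hodd : ∀ i, Odd i → f i = 0) (m : ℕ) :
    ∑ i ∈ Finset.range (2*m+1), f i = ∑ j ∈ Finset.range (m+1), f (2*j) := by
  induction m with
  | zero => simp
  | succ m ih =>
      have h1 : 2*(m+1)+1 = (2*m+1)+1+1 := by ring
      have h2 : 2*m+1+1 = 2*(m+1) := by ring
      rw [h1, Finset.sum_range_succ _ (2*m+1+1), Finset.sum_range_succ _ (2*m+1), ih,
        hodd (2*m+1) ⟨m, by ring⟩, add_zero, h2, ← Finset.sum_range_succ]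

lemma pow_pred (t : ℕ) (h : 0 < t) : (2:ℚ)^t = 2 * 2^(t-1) := by
  cases t with
  | zero => omega
  | succ s => rw [pow_succ]; simp; ring

lemma lemC (n : ℕ) (hn : 0 < n) :
    ∑ k ∈ Finset.range n,
        (((2*n).choose (2*k) : ℚ) * (2^(2*(n-k)-1) - 1) * bernoulli (2*(n-k)))
      + 2^(2*n-1) * bernoulli (2*n) = 1/2 := by
  set f : ℕ → ℚ := fun i => ((2*n).choose i : ℚ) * ((2:ℚ)^i/2 - 1) * bernoulli i with hf
  have hodd : ∀ i, Odd i → f i = 0 := by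
    intro i hi
    rcases eq_or_ne i 1 with rfl | h1
    · norm_num [hf]
    · have : bernoulli i = 0 := by
        rw [bernoulli_eq_bernoulli'_of_ne_one h1]
        exact bernoulli'_eq_zero_of_odd hi (by rcases hi with ⟨j, rfl⟩; omega)
      simp [hf, this]
  -- full sum of f
  have hfull : ∑ i ∈ Finset.range (2*n+1), f i = (1 - 2^(2*n-1)) * bernoulli (2*n) - bernoulli (2*n) := by
    have hb : ∑ i ∈ Finset.range (2*n+1), ((2*n).choose i : ℚ) * bernoulli i = bernoulli (2*n) := by
      rw [Finset.sum_range_succ, sum_bernoulli, if_neg (by omega : 2*n ≠ 1)]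
      simp
    have hpow : (2:ℚ)^(2*n) = 2 * 2^(2*n-1) := pow_pred (2*n) (by omega)
    have : ∑ i ∈ Finset.range (2*n+1), f i
        = (∑ i ∈ Finset.range (2*n+1), ((2*n).choose i : ℚ) * 2^i * bernoulli i)/2
          - ∑ i ∈ Finset.range (2*n+1), ((2*n).choose i : ℚ) * bernoulli i := by
      rw [Finset.sum_div, ← Finset.sum_sub_distrib]
      exact Finset.sum_congr rfl fun i _ => by ring
    rw [this, lemB (2*n), hb, hpow]
    ring
  have heven := even_sum f hodd n
  -- peel off j = 0
  have hpeel : ∑ j ∈ Finset.range (n+1), f (2*j)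
      = (∑ j ∈ Finset.range n, f (2*(j+1))) + f 0 := by
    rw [Finset.sum_range_succ']
  -- reindex
  have hrefl : ∑ k ∈ Finset.range n, f (2*(n-k)) = ∑ j ∈ Finset.range n, f (2*(j+1)) := by
    have := Finset.sum_range_reflect (fun j => f (2*(j+1))) n
    rw [← this]
    refine Finset.sum_congr rfl fun k hk => ?_
    rw [Finset.mem_range] at hk
    congr 2
    omega
  -- target sum equals ∑ f (2*(n-k))
  have htar : ∑ k ∈ Finset.range n,
      (((2*n).choose (2*k) : ℚ) * (2^(2*(n-k)-1) - 1) * bernoulli (2*(n-k)))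
      = ∑ k ∈ Finset.range n, f (2*(n-k)) := by
    refine Finset.sum_congr rfl fun k hk => ?_
    rw [Finset.mem_range] at hk
    have hsym : (2*n).choose (2*k) = (2*n).choose (2*(n-k)) := by
      rw [← Nat.choose_symm (by omega : 2*k ≤ 2*n)]
      congr 1
      omega
    have hpow : (2:ℚ)^(2*(n-k))/2 - 1 = 2^(2*(n-k)-1) - 1 := by
      rw [pow_pred (2*(n-k)) (by omega)]; ring
    show _ = ((2*n).choose (2*(n-k)) : ℚ) * ((2:ℚ)^(2*(n-k))/2 - 1) * bernoulli (2*(n-k))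
    rw [hsym, hpow]
  have hf0 : f 0 = -(1/2) := by norm_num [hf]
  rw [htar, hrefl]
  have : (∑ j ∈ Finset.range n, f (2*(j+1))) = (1 - 2^(2*n-1)) * bernoulli (2*n) - bernoulli (2*n) - f 0 := by
    rw [← hfull, heven, hpeel]; ring
  rw [this, hf0]
  ring

lemma binom (n k : ℕ) (hn : 0 < n) :
    (2*n-1).choose (2*k) * (2*n) = (2*n).choose (2*k) * (2*n - 2*k) := by
  have h := Nat.choose_mul_succ_eq (2*n-1) (2*k)
  have h1 : 2*n-1+1 = 2*n := by omega
  rw [h1] at h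
  rw [h]

lemma alg (A t b c F M c1 c2 B Sn N : ℂ) (hA : A * (t * b) = Sn)
    (hc : c ≠ 0) (hF : F ≠ 0) (hM : M ≠ 0) (hN : N ≠ 0) (hbin : c1 * N = c2 * M) :
    (1 - c⁻¹) * A * c1 * F * (t * c * b * B / (M * F)) = Sn / N * (c2 * (c - 1) * B) := by
  obtain rfl : c1 = c2 * M / N := by rw [eq_div_iff hN]; exact hbin
  obtain rfl : Sn = A * (t * b) := hA.symm
  field_simp

/-- The recursion for `ζ(2n)`:
`Γ(2n) ζ(2n) + Σ_{k=0}^{n-1} α(n,k) ζ(2n-2k) = (−1)^(n−1) π^(2n)/(4n)`, where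
`α(n,k) = (1 − 2^(1−2n+2k)) (−π²)^k C(2n−1, 2k) Γ(2n−2k)`. -/
theorem zeta_even_recursion (n : ℕ) (hn : 0 < n) :
    Complex.Gamma (2 * n) * riemannZeta (2 * n) +
      ∑ k ∈ Finset.range n,
        ((1 - (2 : ℂ) ^ ((1 : ℤ) - 2 * n + 2 * k)) * (-(π : ℂ) ^ 2) ^ k *
            (Nat.choose (2 * n - 1) (2 * k) : ℂ) * Complex.Gamma (2 * n - 2 * k)) *
          riemannZeta (2 * n - 2 * k) =
      (-1) ^ (n - 1) * (π : ℂ) ^ (2 * n) / (4 * n) := by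
  have hπ : (π:ℂ) ≠ 0 := Complex.ofReal_ne_zero.mpr Real.pi_ne_zero
  have hnC : ((n:ℕ) : ℂ) ≠ 0 := Nat.cast_ne_zero.mpr (by omega)
  -- first term
  have hfirst : Complex.Gamma (2 * n) * riemannZeta (2 * n)
      = (-1)^(n-1) * (π:ℂ)^(2*n) / (2*n) * ((2^(2*n-1) * bernoulli (2*n) : ℚ) : ℂ) := by
    have hg : (2:ℂ) * (n:ℂ) = ((2*n - 1 : ℕ) : ℂ) + 1 := by
      rw [show ((2*n - 1 : ℕ) : ℂ) + 1 = ((2*n - 1 + 1 : ℕ) : ℂ) by push_cast; ring,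
        show 2*n - 1 + 1 = 2*n by omega]
      push_cast; ring
    rw [riemannZeta_two_mul_nat (by omega : n ≠ 0), hg, Complex.Gamma_nat_eq_factorial]
    have hfac : ((2*n)! : ℂ) = ((2*n : ℕ) : ℂ) * ((2*n-1)! : ℂ) := by
      rw [show ((2*n : ℕ) : ℂ) * ((2*n-1)! : ℂ) = (((2*n) * (2*n-1)! : ℕ) : ℂ) by push_cast; ring,
        Nat.mul_factorial_pred (by omega : 2*n ≠ 0)]
    have hsgn : ((-1:ℂ))^(n+1) = (-1)^(n-1) := by
      rw [show n+1 = (n-1)+2 by omega, pow_add]; simp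
    have hM2 : ((2*n : ℕ) : ℂ) = 2 * (n:ℂ) := by push_cast; ring
    rw [hfac, hsgn, hM2,
      show ((2^(2*n-1) * bernoulli (2*n) : ℚ) : ℂ) = (2:ℂ)^(2*n-1) * ((bernoulli (2*n) : ℚ) : ℂ)
        by push_cast; ring]
    field_simp [hnC, Nat.cast_ne_zero.mpr (2*n-1).factorial_ne_zero]
    linear_combination (-((bernoulli (2*n) : ℚ) : ℂ)) * hg
  -- sum terms
  have hterm : ∀ k ∈ Finset.range n,
      ((1 - (2 : ℂ) ^ ((1 : ℤ) - 2 * n + 2 * k)) * (-(π : ℂ) ^ 2) ^ k *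
            (Nat.choose (2 * n - 1) (2 * k) : ℂ) * Complex.Gamma (2 * n - 2 * k)) *
          riemannZeta (2 * n - 2 * k)
      = (-1)^(n-1) * (π:ℂ)^(2*n) / (2*n) *
          ((((2*n).choose (2*k) : ℚ) * (2^(2*(n-k)-1) - 1) * bernoulli (2*(n-k)) : ℚ) : ℂ) := by
    intro k hk
    rw [Finset.mem_range] at hk
    have harg : (2:ℂ) * (n:ℂ) - 2 * (k:ℂ) = 2 * (((n - k : ℕ)) : ℂ) := by
      rw [Nat.cast_sub hk.le]; ring
    rw [harg, riemannZeta_two_mul_nat (by omega : n - k ≠ 0)]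
    have hg : (2:ℂ) * (((n - k : ℕ)) : ℂ) = ((2*(n-k) - 1 : ℕ) : ℂ) + 1 := by
      rw [show ((2*(n-k) - 1 : ℕ) : ℂ) + 1 = ((2*(n-k) - 1 + 1 : ℕ) : ℂ) by push_cast; ring,
        show 2*(n-k) - 1 + 1 = 2*(n-k) by omega]
      push_cast; ring
    rw [hg, Complex.Gamma_nat_eq_factorial]
    have hzp : (2:ℂ) ^ ((1:ℤ) - 2*(n:ℤ) + 2*(k:ℤ)) = ((2:ℂ) ^ (2*(n-k) - 1 : ℕ))⁻¹ := by
      have he : (1:ℤ) - 2*(n:ℤ) + 2*(k:ℤ) = -((2*(n-k) - 1 : ℕ) : ℤ) := by omega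
      rw [he, zpow_neg, zpow_natCast]
    rw [hzp]
    have hfac : ((2*(n-k))! : ℂ) = ((2*(n-k) : ℕ) : ℂ) * ((2*(n-k)-1)! : ℂ) := by
      rw [show ((2*(n-k) : ℕ) : ℂ) * ((2*(n-k)-1)! : ℂ)
            = (((2*(n-k)) * (2*(n-k)-1)! : ℕ) : ℂ) by push_cast; ring,
        Nat.mul_factorial_pred (by omega : 2*(n-k) ≠ 0)]
    rw [hfac]
    rw [show ((((2*n).choose (2*k) : ℚ) * (2^(2*(n-k)-1) - 1) * bernoulli (2*(n-k)) : ℚ) : ℂ)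
          = ((2*n).choose (2*k) : ℂ) * ((2:ℂ)^(2*(n-k)-1) - 1) * ((bernoulli (2*(n-k)) : ℚ) : ℂ)
        by push_cast; ring]
    have hsg : (-((π:ℂ))^2)^k = (-1)^k * (π:ℂ)^(2*k) := by
      rw [neg_pow, ← pow_mul]
    have hsgn : ((-1:ℂ))^k * (-1)^((n-k)+1) = (-1)^(n-1) := by
      rw [← pow_add, show k + ((n-k)+1) = (n-1)+2 by omega, pow_add]; simp
    have hpi : ((π:ℂ))^(2*k) * (π:ℂ)^(2*(n-k)) = (π:ℂ)^(2*n) := by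
      rw [← pow_add]; congr 1; omega
    have hA : (-((π:ℂ))^2)^k * ((-1:ℂ)^((n-k)+1) * (π:ℂ)^(2*(n-k)))
        = (-1:ℂ)^(n-1) * (π:ℂ)^(2*n) := by
      rw [hsg]
      linear_combination ((π:ℂ)^(2*k) * (π:ℂ)^(2*(n-k))) * hsgn + ((-1:ℂ))^(n-1) * hpi
    have hbinC : ((2*n-1).choose (2*k) : ℂ) * (2 * (n:ℂ))
        = ((2*n).choose (2*k) : ℂ) * ((2*(n-k) : ℕ) : ℂ) := by
      have h := binom n k hn
      rw [show 2*n - 2*k = 2*(n-k) by omega] at h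
      have := congrArg (fun t : ℕ => (t : ℂ)) h
      push_cast at this ⊢
      linear_combination this
    exact alg _ _ _ _ _ _ _ _ _ _ _ hA (pow_ne_zero _ two_ne_zero)
      (Nat.cast_ne_zero.mpr (2*(n-k)-1).factorial_ne_zero)
      (Nat.cast_ne_zero.mpr (by omega : 2*(n-k) ≠ 0))
      (by simpa using mul_ne_zero two_ne_zero hnC) hbinC
  rw [Finset.sum_congr rfl hterm, hfirst, ← Finset.mul_sum, ← Rat.cast_sum, ← mul_add,
    ← Rat.cast_add, add_comm ((2:ℚ)^(2*n-1) * bernoulli (2*n)) _, lemC n hn]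
  rw [show ((1/2 : ℚ) : ℂ) = 1/2 by norm_num]
  field_simp
  ring
end
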